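/- Let (V, B) be a finite-dimensional real symplectic vector space, P : V → V a linear operator self-adjoint with respect to B, and let A be the alternating bilinear form A(u, v) = B(Pu, v). Let α, β ∈ ℝ with β ≠ 0, and suppose (P² − 2αP + (α² + β²)I)^n = 0 for some n ≥ 1 (i.e. P has the single pair of complex conjugate eigenvalues α ± iβ). Let S be the semisimple part in the Jordan–Chevalley decomposition of the operator (P − αI)/β (so (P − αI)/β = S + N with S semisimple, N nilpotent, and SN = NS). Then S is a complex structure, S² = −I, and S is self-adjoint with respect to both A and B: B(Su, v) = B(u, Sv) and A(Su, v) = A(u, Sv) for all u, v ∈ V. -/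

import Mathlib

/-- An operator on a vector space is semisimple if every invariant subspace has an
invariant complement. -/
def IsSemisimpleOperator {K V : Type*} [Field K] [AddCommGroup V] [Module K V]
    (S : Module.End K V) : Prop :=
  ∀ U : Submodule K V, (∀ x ∈ U, S x ∈ U) →
    ∃ U' : Submodule K V, IsCompl U U' ∧ ∀ x ∈ U', S x ∈ U'

/-- If `P` is a `B`-self-adjoint operator on a real symplectic space `(V, B)` with the single
pair of complex conjugate eigenvalues `α ± iβ` (`β ≠ 0`), and `S` is the semisimple part of
the Jordan–Chevalley decomposition of `(P − αI)/β`, then `S` is a complex structure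
(`S² = −I`) which is self-adjoint with respect to both `B` and `A(u,v) = B(Pu, v)`. -/
theorem semisimple_part_is_selfadjoint_complex_structure
    (V : Type*) [AddCommGroup V] [Module ℝ V] [FiniteDimensional ℝ V]
    (B : LinearMap.BilinForm ℝ V) (hBalt : B.IsAlt)
    (hBnd : ∀ u : V, (∀ v : V, B u v = 0) → u = 0)
    (P : Module.End ℝ V) (hP : ∀ u v : V, B (P u) v = B u (P v))
    (α β : ℝ) (hβ : β ≠ 0) (n : ℕ) (hn : 1 ≤ n)
    (hchar : (P ^ 2 - (2 * α) • P + (α ^ 2 + β ^ 2) • (1 : Module.End ℝ V)) ^ n = 0)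
    (S Nn : Module.End ℝ V) (hS : IsSemisimpleOperator S) (hNn : IsNilpotent Nn)
    (hcomm : S * Nn = Nn * S)
    (hsum : β⁻¹ • (P - α • (1 : Module.End ℝ V)) = S + Nn) :
    S ^ 2 = -1 ∧ (∀ u v : V, B (S u) v = B u (S v)) ∧
      (∀ u v : V, B (P (S u)) v = B (P u) (S v)) := by
  set T : Module.End ℝ V := β⁻¹ • (P - α • (1 : Module.End ℝ V)) with hT
  -- basic commutation facts
  have cSN : Commute S Nn := hcomm
  have cST : Commute S T := by
    rw [hsum]; exact (Commute.refl S).add_right cSN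
  have cNT : Commute Nn T := by
    rw [hsum]; exact cSN.symm.add_right (Commute.refl Nn)
  -- (T^2 + 1) is nilpotent
  have hT2 : T ^ 2 + 1 =
      (β ^ 2)⁻¹ • (P ^ 2 - (2 * α) • P + (α ^ 2 + β ^ 2) • (1 : Module.End ℝ V)) := by
    have hQ : (P - α • (1 : Module.End ℝ V)) * (P - α • (1 : Module.End ℝ V))
        = P ^ 2 - (2 * α) • P + (α ^ 2) • (1 : Module.End ℝ V) := by
      simp only [sub_mul, mul_sub, smul_mul_assoc, mul_smul_comm, mul_one, one_mul, pow_two]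
      module
    have : T ^ 2 = (β ^ 2)⁻¹ •
        (P ^ 2 - (2 * α) • P + (α ^ 2) • (1 : Module.End ℝ V)) := by
      rw [hT, pow_two, smul_mul_smul_comm, hQ, ← mul_inv, ← pow_two]
    have h1 : (1 : Module.End ℝ V) = (β ^ 2)⁻¹ • ((β ^ 2) • (1 : Module.End ℝ V)) := by
      rw [smul_smul, inv_mul_cancel₀ (pow_ne_zero 2 hβ), one_smul]
    rw [this]
    nth_rewrite 2 [h1]
    rw [← smul_add]
    congr 1
    rw [add_smul]
    abel
  have hT2nil : IsNilpotent (T ^ 2 + 1) := by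
    refine ⟨n, ?_⟩
    rw [hT2, smul_pow, hchar, smul_zero]
  -- (S^2 + 1) is nilpotent
  have hSeqTN : S = T - Nn := by rw [hsum]; abel
  have hS2nil : IsNilpotent (S ^ 2 + 1) := by
    have key : S ^ 2 + 1 = (T ^ 2 + 1) + (S + T) * (S - T) := by
      rw [← cST.sq_sub_sq]; abel
    rw [key]
    have hSmT : S - T = -Nn := by rw [hSeqTN]; abel
    have hmul : IsNilpotent ((S + T) * (S - T)) := by
      rw [hSmT, mul_neg]
      exact ((cSN.add_left cNT.symm).isNilpotent_mul_left hNn).neg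
    refine Commute.isNilpotent_add ?_ hT2nil hmul
    have c1 : Commute (T ^ 2 + 1) (S + T) :=
      ((cST.symm.pow_left 2).add_left (Commute.one_left _)).add_right
        (((Commute.refl T).pow_left 2).add_left (Commute.one_left _))
    have c2 : Commute (T ^ 2 + 1) (S - T) :=
      ((cST.symm.pow_left 2).add_left (Commute.one_left _)).sub_right
        (((Commute.refl T).pow_left 2).add_left (Commute.one_left _))
    exact c1.mul_right c2
  -- S is semisimple in the mathlib sense
  have hSss : S.IsSemisimple := by
    rw [Module.End.isSemisimple_iff]
    intro p hp
    obtain ⟨q, hq1, hq2⟩ := hS p (fun x hx => hp hx)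
    exact ⟨q, fun x hx => hq2 x hx, hq1⟩
  -- hence S^2 + 1 = 0
  have hS2 : S ^ 2 = -1 := by
    have hmem : S ^ 2 + 1 ∈ Algebra.adjoin ℝ {S} :=
      add_mem (pow_mem (Algebra.self_mem_adjoin_singleton ℝ S) 2) (one_mem _)
    have h0 := Module.End.eq_zero_of_isNilpotent_isSemisimple hS2nil
      (hSss.of_mem_adjoin_singleton hmem)
    exact eq_neg_of_add_eq_zero_left h0
  -- Jordan–Chevalley for T, with components polynomials in T
  obtain ⟨N₀, hN₀mem, S₀, hS₀mem, hN₀nil, hS₀ss, hTsum⟩ :=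
    Module.End.exists_isNilpotent_isSemisimple (f := T)
  -- uniqueness: S = S₀
  have cSS₀ : Commute S S₀ :=
    Algebra.commute_of_mem_adjoin_singleton_of_commute hS₀mem cST
  have cNN₀ : Commute Nn N₀ :=
    Algebra.commute_of_mem_adjoin_singleton_of_commute hN₀mem cNT
  have hdiff : S - S₀ = N₀ - Nn := by
    have h : S + Nn = N₀ + S₀ := hsum ▸ hTsum ▸ rfl
    rw [sub_eq_sub_iff_add_eq_add]
    exact h
  have hDnil : IsNilpotent (S - S₀) := by
    rw [hdiff]
    exact Commute.isNilpotent_sub cNN₀.symm hN₀nil hNn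
  have hDss : (S - S₀).IsSemisimple :=
    Module.End.IsSemisimple.sub_of_commute cSS₀ hSss hS₀ss
  have hSeqS₀ : S = S₀ := by
    have := Module.End.eq_zero_of_isNilpotent_isSemisimple hDnil hDss
    exact sub_eq_zero.mp this
  -- S is a polynomial in P
  have hTP : T ∈ Algebra.adjoin ℝ {P} := by
    rw [hT]
    exact Subalgebra.smul_mem _
      (sub_mem (Algebra.self_mem_adjoin_singleton ℝ P)
        (Subalgebra.smul_mem _ (one_mem _) α)) β⁻¹
  have hSP : S ∈ Algebra.adjoin ℝ {P} := by
    rw [hSeqS₀]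
    exact Algebra.adjoin_le (Set.singleton_subset_iff.mpr hTP) hS₀mem
  -- powers of P are B-self-adjoint
  have hpow : ∀ (k : ℕ) (u v : V), B ((P ^ k) u) v = B u ((P ^ k) v) := by
    intro k
    induction k with
    | zero => intro u v; simp
    | succ k ih =>
      intro u v
      rw [pow_succ, Module.End.mul_apply, Module.End.mul_apply, ih, hP]
      congr 1
      rw [← Module.End.mul_apply, ← Module.End.mul_apply, ← pow_succ, ← pow_succ']
  -- hence S is B-self-adjoint
  have hSadj : ∀ u v : V, B (S u) v = B u (S v) := by
    rw [Algebra.adjoin_singleton_eq_range_aeval] at hSP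
    obtain ⟨p, hp⟩ := hSP
    have hp' : (Polynomial.aeval P) p = S := hp
    intro u v
    rw [← hp', Polynomial.aeval_eq_sum_range]
    simp only [LinearMap.sum_apply, LinearMap.smul_apply, map_sum, map_smul,
      LinearMap.smul_apply, smul_eq_mul]
    exact Finset.sum_congr rfl fun i _ => by rw [hpow]
  refine ⟨hS2, hSadj, fun u v => ?_⟩
  have cPS : Commute P S := Algebra.commute_of_mem_adjoin_self hSP
  have hx : P (S u) = S (P u) := by
    have := DFunLike.congr_fun cPS.eq u
    simpa [Module.End.mul_apply] using this
  rw [hx, hSadj]
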